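/- Let 𝒱 and 𝒲 be reduced cyclic words and (P,Q) ∈ 𝕃ℙ₂(𝒱,𝒲). Then the positive integers j and k with P an occurrence of a subword of 𝒱ʲ, Q an occurrence of a subword of 𝒲ᵏ, l(𝒱^{j−1}) < l(P) ≤ l(𝒱ʲ) and l(𝒲^{k−1}) < l(Q) ≤ l(𝒲ᵏ) can be chosen so that j ≤ 2 + l(𝒲)/l(𝒱) and k ≤ 2 + l(𝒱)/l(𝒲). -/

import Mathlib

open List

namespace CyclicWords

/-- A letter of the alphabet `𝔸ₙ = {a₁,…,aₙ, ā₁,…,āₙ}`: a generator index together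
with a Boolean recording whether the letter is barred. -/
abbrev Letter (n : ℕ) := Bool × Fin n

/-- The involution `x ↦ x̄` on letters. -/
def Letter.bar {n : ℕ} (x : Letter n) : Letter n := (!x.1, x.2)

/-- A linear word: a finite sequence of letters. -/
abbrev Word (n : ℕ) := List (Letter n)

/-- `W̄ = x̄ₘ ⋯ x̄₁ x̄₀` for `W = x₀x₁⋯xₘ`. -/
def Word.bar {n : ℕ} (W : Word n) : Word n := (W.map Letter.bar).reverse

/-- `Wᵏ`, the concatenation of `k` copies of `W`. -/
def wpow {n : ℕ} (W : Word n) (k : ℕ) : Word n := (List.replicate k W).flatten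

/-- A linear word is freely reduced when consecutive letters are never inverse
to each other. -/
def FreelyReduced {n : ℕ} (W : Word n) : Prop :=
  W.Chain' (fun a b => b ≠ Letter.bar a)

/-- A cyclic word: an equivalence class of linear words under cyclic rotation. -/
abbrev CWord (n : ℕ) := Cycle (Letter n)

/-- `c(W)`, the cyclic word represented by the linear word `W`. -/
def cyc {n : ℕ} (W : Word n) : CWord n := ↑W

/-- The length of a cyclic word. -/
def clen {n : ℕ} (𝒲 : CWord n) : ℕ := 𝒲.length

/-- A cyclic word is reduced if it is non-empty and all of its linear
representatives are freely reduced. -/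
def CReduced {n : ℕ} (𝒲 : CWord n) : Prop :=
  𝒲 ≠ Cycle.nil ∧ ∀ W : Word n, cyc W = 𝒲 → FreelyReduced W

/-- `P` is a (linear) subword of the cyclic word `𝒲`, i.e. a linear subword of
one of its linear representatives. -/
def Subword {n : ℕ} (P : Word n) (𝒲 : CWord n) : Prop :=
  ∃ W : Word n, cyc W = 𝒲 ∧ P <:+: W

/-- `P` is a subword of the power `𝒲ʲ`. -/
def SubwordPow {n : ℕ} (P : Word n) (𝒲 : CWord n) (j : ℕ) : Prop :=
  ∃ W : Word n, cyc W = 𝒲 ∧ P <:+: wpow W j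

/-- A surface symbol: a reduced cyclic word in which every letter of `𝔸ₙ`
appears exactly once. -/
def SurfaceSymbol {n : ℕ} (𝒪 : CWord n) : Prop :=
  CReduced 𝒪 ∧ ∃ O : Word n, cyc O = 𝒪 ∧ O.Nodup ∧ ∀ x : Letter n, x ∈ O

/-- `𝒲` is reduced and its (distinct) letters embed into `𝒪` preserving the
cyclic order. -/
def OrientPos {n : ℕ} (𝒪 𝒲 : CWord n) : Prop :=
  CReduced 𝒲 ∧ ∃ W O : Word n, cyc W = 𝒲 ∧ cyc O = 𝒪 ∧ W.Sublist O

/-- `𝒲` is reduced and its (distinct) letters embed into `𝒪` reversing the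
cyclic order. -/
def OrientNeg {n : ℕ} (𝒪 𝒲 : CWord n) : Prop :=
  CReduced 𝒲 ∧ ∃ W O : Word n, cyc W = 𝒲 ∧ cyc O = 𝒪 ∧ W.Sublist O.reverse

open Classical in
/-- The number `o(𝒲) ∈ {-1,0,1}` associated to a cyclic word `𝒲`. -/
noncomputable def o {n : ℕ} (𝒪 𝒲 : CWord n) : ℤ :=
  if OrientPos 𝒪 𝒲 then 1 else if OrientNeg 𝒪 𝒲 then -1 else 0

/-- Condition (1) of the definition of `𝒪`-linked pairs. -/
def LinkedType1 {n : ℕ} (𝒪 : CWord n) (P Q : Word n) : Prop :=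
  ∃ p₁ p₂ q₁ q₂ : Letter n, P = [p₁, p₂] ∧ Q = [q₁, q₂] ∧
    o 𝒪 (cyc [Letter.bar p₁, Letter.bar q₁, p₂, q₂]) ≠ 0

/-- Condition (2) of the definition of `𝒪`-linked pairs (`x₁`, `x₂` denote the
first and last letters of `Y`). -/
def LinkedType2 {n : ℕ} (𝒪 : CWord n) (P Q : Word n) : Prop :=
  ∃ (p₁ p₂ q₁ q₂ : Letter n) (Y : Word n), Y ≠ [] ∧
    P = p₁ :: Y ++ [p₂] ∧ Q = q₁ :: Y ++ [q₂] ∧ p₁ ≠ q₁ ∧ p₂ ≠ q₂ ∧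
    ∀ x₁ x₂ : Letter n, Y.head? = some x₁ → Y.getLast? = some x₂ →
      o 𝒪 (cyc [Letter.bar p₁, Letter.bar q₁, x₁]) = o 𝒪 (cyc [p₂, q₂, Letter.bar x₂])

/-- Condition (3) of the definition of `𝒪`-linked pairs. -/
def LinkedType3 {n : ℕ} (𝒪 : CWord n) (P Q : Word n) : Prop :=
  ∃ (p₁ p₂ q₁ q₂ : Letter n) (Y : Word n), Y ≠ [] ∧
    P = p₁ :: Y ++ [p₂] ∧ Q = q₁ :: Word.bar Y ++ [q₂] ∧
    p₁ ≠ Letter.bar q₂ ∧ p₂ ≠ Letter.bar q₁ ∧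
    ∀ x₁ x₂ : Letter n, Y.head? = some x₁ → Y.getLast? = some x₂ →
      o 𝒪 (cyc [q₂, Letter.bar p₁, x₁]) = o 𝒪 (cyc [Letter.bar q₁, p₂, Letter.bar x₂])

/-- The ordered pair `(P,Q)` is `𝒪`-linked. -/
def IsLinked {n : ℕ} (𝒪 : CWord n) (P Q : Word n) : Prop :=
  FreelyReduced P ∧ FreelyReduced Q ∧ 2 ≤ P.length ∧ 2 ≤ Q.length ∧
    (LinkedType1 𝒪 P Q ∨ LinkedType2 𝒪 P Q ∨ LinkedType3 𝒪 P Q)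

open Classical in
/-- The sign of a linked pair `(P,Q)`. -/
noncomputable def sign {n : ℕ} (𝒪 : CWord n) (P Q : Word n) : ℤ :=
  match P, Q with
  | p₁ :: ps, q₁ :: qs =>
    match ps.getLast?, qs.getLast?, ps.head? with
    | some p₂, some q₂, some x₁ =>
      if LinkedType1 𝒪 (p₁ :: ps) (q₁ :: qs) then
        o 𝒪 (cyc [Letter.bar p₁, Letter.bar q₁, p₂, q₂])
      else if LinkedType2 𝒪 (p₁ :: ps) (q₁ :: qs) then
        o 𝒪 (cyc [Letter.bar p₁, Letter.bar q₁, x₁])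
      else if LinkedType3 𝒪 (p₁ :: ps) (q₁ :: qs) then
        o 𝒪 (cyc [q₂, Letter.bar p₁, x₁])
      else 0
    | _, _, _ => 0
  | _, _ => 0

/-- `𝕃ℙ₁(𝒲)`: `(P,Q)` is an `𝒪`-linked pair of subwords of `𝒲`. -/
def LP1 {n : ℕ} (𝒪 𝒲 : CWord n) (P Q : Word n) : Prop :=
  IsLinked 𝒪 P Q ∧ Subword P 𝒲 ∧ Subword Q 𝒲

/-- `𝕃ℙ₂(𝒱,𝒲)`: `(P,Q)` is an `𝒪`-linked pair with `P` a subword of `𝒱ʲ`,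
`Q` a subword of `𝒲ᵏ` in the appropriate length windows. -/
def LP2 {n : ℕ} (𝒪 𝒱 𝒲 : CWord n) (P Q : Word n) : Prop :=
  IsLinked 𝒪 P Q ∧
    ∃ j k : ℕ, 0 < j ∧ 0 < k ∧ SubwordPow P 𝒱 j ∧ SubwordPow Q 𝒲 k ∧
      (j - 1) * clen 𝒱 < P.length ∧ P.length ≤ j * clen 𝒱 ∧
      (k - 1) * clen 𝒲 < Q.length ∧ Q.length ≤ k * clen 𝒲

/-- The cut data for `δ` when `(P,Q)` has type (1) or (2): two cuts of `𝒲`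
producing `W₁` (starting at the occurrence of `p₂`, the last letter of `P`) and
`W₂` (starting at the occurrence of `q₂`, the last letter of `Q`). -/
def DeltaPair12 {n : ℕ} (𝒪 𝒲 : CWord n) (P Q W₁ W₂ : Word n) : Prop :=
  (LinkedType1 𝒪 P Q ∨ LinkedType2 𝒪 P Q) ∧
  𝒲 = cyc (W₁ ++ W₂) ∧
  (∃ (P' : Word n) (p₂ : Letter n), P = P' ++ [p₂] ∧ W₁.head? = some p₂ ∧
      P' <:+ W₁ ++ W₂) ∧
  (∃ (Q' : Word n) (q₂ : Letter n), Q = Q' ++ [q₂] ∧ W₂.head? = some q₂ ∧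
      Q' <:+ W₂ ++ W₁)

/-- The cut data for `δ` when `(P,Q)` has type (3): `W₁` runs from `p₂` to
`q₁`, and `W₂` from `q₂` to `p₁`. -/
def DeltaPair3 {n : ℕ} (𝒪 𝒲 : CWord n) (P Q W₁ W₂ : Word n) : Prop :=
  LinkedType3 𝒪 P Q ∧
  ∃ (p₁ p₂ q₁ q₂ : Letter n) (Y Y' : Word n), Y ≠ [] ∧ Y' ≠ [] ∧
    P = p₁ :: Y ++ [p₂] ∧ Q = q₁ :: Y' ++ [q₂] ∧
    W₁.head? = some p₂ ∧ W₁.getLast? = some q₁ ∧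
    W₂.head? = some q₂ ∧ W₂.getLast? = some p₁ ∧
    𝒲 = cyc (W₁ ++ Y' ++ W₂ ++ Y)

/-- The words `W₁`, `W₂` obtained by cutting `𝒲` along the linked pair `(P,Q)`. -/
def DeltaPair {n : ℕ} (𝒪 𝒲 : CWord n) (P Q W₁ W₂ : Word n) : Prop :=
  DeltaPair12 𝒪 𝒲 P Q W₁ W₂ ∨ DeltaPair3 𝒪 𝒲 P Q W₁ W₂

open Classical in
/-- A choice of the pair of linear words obtained by cutting `𝒲` along `(P,Q)`. -/
noncomputable def deltaW {n : ℕ} (𝒪 𝒲 : CWord n) (P Q : Word n) : Word n × Word n :=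
  if h : ∃ W : Word n × Word n, DeltaPair 𝒪 𝒲 P Q W.1 W.2 then h.choose else ([], [])

/-- The cyclic word `δ₁(P,Q)`. -/
noncomputable def delta1 {n : ℕ} (𝒪 𝒲 : CWord n) (P Q : Word n) : CWord n :=
  cyc (deltaW 𝒪 𝒲 P Q).1

/-- The cyclic word `δ₂(P,Q)`. -/
noncomputable def delta2 {n : ℕ} (𝒪 𝒲 : CWord n) (P Q : Word n) : CWord n :=
  cyc (deltaW 𝒪 𝒲 P Q).2

/-- `W₁` is the linear representative of `↑W₁` obtained by cutting immediately
before (the occurrence of) the last letter of `P`: `P` occurs (in a power)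
ending exactly at the cut. -/
def CutEnds {n : ℕ} (W₁ P : Word n) : Prop :=
  ∃ (P' : Word n) (p₂ : Letter n) (j : ℕ),
    P = P' ++ [p₂] ∧ W₁.head? = some p₂ ∧ P' <:+ wpow W₁ j

/-- The data for `γ(P,Q)` when `(P,Q) ∈ 𝕃ℙ₂(𝒱,𝒲)` has type (1) or (2):
`γ(P,Q) = c(V₁W₁)` where `V₁`, `W₁` are the representatives of `𝒱`, `𝒲` obtained
by cutting immediately before `p₂`, resp. `q₂`. -/
def GammaPair12 {n : ℕ} (𝒪 𝒱 𝒲 : CWord n) (P Q : Word n) (G : CWord n) : Prop :=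
  (LinkedType1 𝒪 P Q ∨ LinkedType2 𝒪 P Q) ∧
  ∃ V₁ W₁ : Word n, cyc V₁ = 𝒱 ∧ cyc W₁ = 𝒲 ∧ CutEnds V₁ P ∧ CutEnds W₁ Q ∧
    G = cyc (V₁ ++ W₁)

/-- The data for `γ(P,Q)` when `(P,Q) ∈ 𝕃ℙ₂(𝒱,𝒲)` has type (3):
`V₁` is the subword of `𝒱` starting right after the end of `Y` and ending right
before the first letter of `Y` (whose footprint in `𝒱` is the arc `U`), and
similarly `W₁` for `Ȳ` in `𝒲`; then `γ(P,Q) = c(V₁W₁)`. -/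
def GammaPair3 {n : ℕ} (𝒪 𝒱 𝒲 : CWord n) (P Q : Word n) (G : CWord n) : Prop :=
  LinkedType3 𝒪 P Q ∧
  ∃ (p₁ p₂ q₁ q₂ : Letter n) (Y V₁ W₁ U U' : Word n) (j k : ℕ),
    P = p₁ :: Y ++ [p₂] ∧ Q = q₁ :: Word.bar Y ++ [q₂] ∧
    V₁.head? = some p₂ ∧ V₁.getLast? = some p₁ ∧
    W₁.head? = some q₂ ∧ W₁.getLast? = some q₁ ∧
    𝒱 = cyc (U ++ V₁) ∧ Y <+: wpow (U ++ V₁) j ∧ Y.length % clen 𝒱 = U.length ∧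
    𝒲 = cyc (U' ++ W₁) ∧ Word.bar Y <+: wpow (U' ++ W₁) k ∧
      (Word.bar Y).length % clen 𝒲 = U'.length ∧
    G = cyc (V₁ ++ W₁)

/-- `G` is the cyclic word `γ(P,Q)` associated to `(P,Q) ∈ 𝕃ℙ₂(𝒱,𝒲)`. -/
def GammaPair {n : ℕ} (𝒪 𝒱 𝒲 : CWord n) (P Q : Word n) (G : CWord n) : Prop :=
  GammaPair12 𝒪 𝒱 𝒲 P Q G ∨ GammaPair3 𝒪 𝒱 𝒲 P Q G

open Classical in
/-- A choice of the cyclic word `γ(P,Q)` for `(P,Q) ∈ 𝕃ℙ₂(𝒱,𝒲)`. -/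
noncomputable def gamma {n : ℕ} (𝒪 𝒱 𝒲 : CWord n) (P Q : Word n) : CWord n :=
  if h : ∃ G : CWord n, GammaPair 𝒪 𝒱 𝒲 P Q G then h.choose else Cycle.nil

/-- The set of non-empty reduced cyclic words, the basis of `𝕍`. -/
def RedCyc (n : ℕ) := {𝒲 : CWord n // CReduced 𝒲}

instance {n : ℕ} [NeZero n] : Inhabited (RedCyc n) :=
  ⟨⟨cyc [default], by
    constructor
    · intro h
      have h' : ([(default : Letter n)] : Word n) = [] := (Cycle.coe_eq_nil _).mp h
      simp at h'
    · intro W hW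
      have h1 : W ~r [(default : Letter n)] := Cycle.coe_eq_coe.mp hW
      have h2 : W = [(default : Letter n)] := List.perm_singleton.mp h1.perm
      rw [h2]
      exact List.isChain_singleton _⟩⟩

open Classical in
/-- View a cyclic word as a basis element of `𝕍` (junk value if not reduced). -/
noncomputable def toRed {n : ℕ} [NeZero n] (c : CWord n) : RedCyc n :=
  if h : CReduced c then ⟨c, h⟩ else default



section AuxPeriod

variable {α : Type*}


/-- Repeated application of a period. -/
lemma fw_steps (f : ℕ → α) (a m : ℕ)
    (pa : ∀ i, i + a < m → f i = f (i + a)) :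
    ∀ t i, i + t * a < m → f i = f (i + t * a) := by
  intro t
  induction t with
  | zero => intro i _; simp
  | succ t ih =>
    intro i hi
    have e : (t + 1) * a = t * a + a := by ring
    have h1 : i + a < m := by omega
    have h2 : (i + a) + t * a < m := by omega
    calc f i = f (i + a) := pa i h1
      _ = f (i + a + t * a) := ih (i + a) h2
      _ = f (i + (t + 1) * a) := by rw [show i + a + t * a = i + (t+1)*a by ring]

/-- Congruent indices give equal values, single period. -/
lemma fw_one (f : ℕ → α) (a m : ℕ) (ha : 0 < a)
    (pa : ∀ i, i + a < m → f i = f (i + a)) :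
    ∀ i j, i < m → j < m → i % a = j % a → f i = f j := by
  have key : ∀ i j, i ≤ j → i < m → j < m → i % a = j % a → f i = f j := by
    intro i j hij hi hj hmod
    have hd : a ∣ j - i := (Nat.modEq_iff_dvd' hij).mp hmod
    obtain ⟨t, ht⟩ := hd
    have hj' : j = i + t * a := by
      have : a * t = t * a := by ring
      omega
    rw [hj']
    exact fw_steps f a m pa t i (by omega)
  intro i j hi hj hmod
  rcases le_total i j with h | h
  · exact key i j h hi hj hmod
  · exact (key j i h hj hi hmod.symm).symm

/-- Fine–Wilf style lemma: two periods give the gcd period. -/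
lemma fine_wilf (f : ℕ → α) :
    ∀ N a b m, a + b ≤ N → 0 < a → 0 < b → a + b ≤ m →
      (∀ i, i + a < m → f i = f (i + a)) → (∀ i, i + b < m → f i = f (i + b)) →
      ∀ i j, i < m → j < m → i % Nat.gcd a b = j % Nat.gcd a b → f i = f j := by
  intro N
  induction N with
  | zero => intro a b m hN ha; omega
  | succ N ih =>
    intro a b m hN ha hb hm pa pb i j hi hj hij
    rcases lt_trichotomy a b with hab | rfl | hab
    · -- a < b : replace b by b - a, m by m - a
      have hb' : 0 < b - a := by omega
      have hgcd : Nat.gcd a (b - a) = Nat.gcd a b := Nat.gcd_sub_self_right hab.le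
      have pa' : ∀ x, x + a < m - a → f x = f (x + a) := fun x hx => pa x (by omega)
      have pb' : ∀ x, x + (b - a) < m - a → f x = f (x + (b - a)) := by
        intro x hx
        have h1 : x + b < m := by omega
        have h2 : x + (b - a) + a = x + b := by omega
        rw [pb x h1, ← h2, ← pa (x + (b - a)) (by omega)]
      have main := ih a (b - a) (m - a) (by omega) ha hb' (by omega) pa' pb'
      obtain ⟨c, hc⟩ := Nat.gcd_dvd_left a b
      set g := Nat.gcd a b with hg
      have reduce : ∀ x, x < m → ∃ x', x' < m - a ∧ x' % g = x % g ∧ f x' = f x := by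
        intro x hx
        rcases lt_or_ge x (m - a) with h | h
        · exact ⟨x, h, rfl, rfl⟩
        · have hax : a ≤ x := by omega
          refine ⟨x - a, by omega, ?_, ?_⟩
          · conv_rhs => rw [show x = (x - a) + g * c by omega]
            rw [Nat.add_mul_mod_self_left]
          · have h3 := pa (x - a) (by omega)
            rw [show x - a + a = x by omega] at h3
            exact h3
      obtain ⟨i', hi1, hi2, hi3⟩ := reduce i hi
      obtain ⟨j', hj1, hj2, hj3⟩ := reduce j hj
      rw [← hi3, ← hj3]
      exact main i' j' hi1 hj1 (by rw [hgcd]; omega)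
    · rw [Nat.gcd_self] at hij
      exact fw_one f a m ha pa i j hi hj hij
    · -- b < a : symmetric
      have ha' : 0 < a - b := by omega
      have hgcd : Nat.gcd (a - b) b = Nat.gcd a b := by
        rw [Nat.gcd_comm, Nat.gcd_sub_self_right hab.le, Nat.gcd_comm]
      have pb' : ∀ x, x + b < m - b → f x = f (x + b) := fun x hx => pb x (by omega)
      have pa' : ∀ x, x + (a - b) < m - b → f x = f (x + (a - b)) := by
        intro x hx
        have h1 : x + a < m := by omega
        have h2 : x + (a - b) + b = x + a := by omega
        rw [pa x h1, ← h2, ← pb (x + (a - b)) (by omega)]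
      have main := ih (a - b) b (m - b) (by omega) ha' hb (by omega) pa' pb'
      obtain ⟨c, hc⟩ := Nat.gcd_dvd_right a b
      set g := Nat.gcd a b with hg
      have reduce : ∀ x, x < m → ∃ x', x' < m - b ∧ x' % g = x % g ∧ f x' = f x := by
        intro x hx
        rcases lt_or_ge x (m - b) with h | h
        · exact ⟨x, h, rfl, rfl⟩
        · have hbx : b ≤ x := by omega
          refine ⟨x - b, by omega, ?_, ?_⟩
          · conv_rhs => rw [show x = (x - b) + g * c by omega]
            rw [Nat.add_mul_mod_self_left]
          · have h3 := pb (x - b) (by omega)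
            rw [show x - b + b = x by omega] at h3
            exact h3
      obtain ⟨i', hi1, hi2, hi3⟩ := reduce i hi
      obtain ⟨j', hj1, hj2, hj3⟩ := reduce j hj
      rw [← hi3, ← hj3]
      exact main i' j' hi1 hj1 (by rw [hgcd]; omega)


end AuxPeriod

section AuxWord

variable {n : ℕ}

lemma wpow_succ' (V : Word n) (j : ℕ) : wpow V (j+1) = V ++ wpow V j := by
  simp [wpow, List.replicate_succ]

lemma wpow_length' (V : Word n) (j : ℕ) : (wpow V j).length = j * V.length := by
  induction j with
  | zero => simp [wpow]
  | succ j ih => rw [wpow_succ']; simp [ih]; ring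

lemma wpow_getD (V : Word n) (d : Letter n) :
    ∀ j u, u < j * V.length → (wpow V j).getD u d = V.getD (u % V.length) d := by
  intro j
  induction j with
  | zero => omega
  | succ j ih =>
    intro u hu
    rw [wpow_succ']
    rcases lt_or_ge u V.length with h | h
    · rw [List.getD_append _ _ _ _ h, Nat.mod_eq_of_lt h]
    · have e : (j+1) * V.length = j * V.length + V.length := by ring
      rw [List.getD_append_right _ _ _ _ h, ih (u - V.length) (by omega),
        ← Nat.mod_eq_sub_mod h]

/-- A subword of a power of `V` is `V.length`-periodic. -/
lemma infix_period {P V : Word n} {j : ℕ} (h : P <:+: wpow V j) (d : Letter n)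
    (i : ℕ) (hi : i + V.length < P.length) :
    P.getD i d = P.getD (i + V.length) d := by
  rcases Nat.eq_zero_or_pos V.length with h0 | h0
  · rw [h0, Nat.add_zero]
  obtain ⟨s, t, hst⟩ := h
  have hlen : s.length + P.length + t.length = j * V.length := by
    rw [← wpow_length' V j, ← hst]; simp; ring
  have key : ∀ x, x < P.length → P.getD x d = V.getD ((s.length + x) % V.length) d := by
    intro x hx
    have h1 : (s ++ (P ++ t)).getD (s.length + x) d = P.getD x d := by
      rw [List.getD_append_right _ _ _ _ (by omega), Nat.add_sub_cancel_left,
        List.getD_append _ _ _ _ hx]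
    have h2 : s ++ (P ++ t) = wpow V j := by rw [← List.append_assoc, hst]
    rw [← h1, h2, wpow_getD V d j _ (by omega)]
  rw [key i (by omega), key (i + V.length) hi,
    show s.length + (i + V.length) = (s.length + i) + V.length by ring,
    Nat.add_mod_right]

lemma barbar (x : Letter n) : Letter.bar (Letter.bar x) = x := by
  simp [Letter.bar]

lemma length_bar (Y : Word n) : (Word.bar Y).length = Y.length := by
  simp [Word.bar]

lemma bar_getD (Y : Word n) (d d' : Letter n) (i : ℕ) (h : i < Y.length) :
    (Word.bar Y).getD i d = Letter.bar (Y.getD (Y.length - 1 - i) d') := by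
  rw [List.getD_eq_getElem _ _ (by rw [length_bar]; omega),
    List.getD_eq_getElem _ _ (by omega)]
  simp only [Word.bar]
  rw [List.getElem_reverse]
  simp [Letter.bar]

lemma getD_mid (x y : Letter n) (Y : Word n) (d : Letter n) (i : ℕ) (h : i < Y.length) :
    (x :: (Y ++ [y])).getD (i+1) d = Y.getD i d := by
  rw [List.getD_cons_succ, List.getD_append _ _ _ _ h]

lemma getD_last (x y : Letter n) (Y : Word n) (d : Letter n) :
    (x :: (Y ++ [y])).getD (Y.length + 1) d = y := by
  rw [List.getD_cons_succ, List.getD_append_right _ _ _ _ (le_refl _)]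
  simp

/-- Key combinatorial bound: a linked pair whose words are periodic with
periods `a` and `b` has both lengths at most `a + b + 1`. -/
lemma linked_len_bound {a b : ℕ} (𝒪 : CWord n) (ha : 0 < a) (hb : 0 < b)
    (P Q : Word n)
    (pa : ∀ d : Letter n, ∀ i, i + a < P.length → P.getD i d = P.getD (i+a) d)
    (pb : ∀ d : Letter n, ∀ i, i + b < Q.length → Q.getD i d = Q.getD (i+b) d)
    (hl : LinkedType1 𝒪 P Q ∨ LinkedType2 𝒪 P Q ∨ LinkedType3 𝒪 P Q) :
    P.length ≤ a + b + 1 ∧ Q.length ≤ a + b + 1 := by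
  -- mod-congruence helper
  have hcong : ∀ m : ℕ, a ≤ m → b ≤ m →
      (m - a) % Nat.gcd a b = (m - b) % Nat.gcd a b := by
    intro m ham hbm
    obtain ⟨ca, hca⟩ := Nat.gcd_dvd_left a b
    obtain ⟨cb, hcb⟩ := Nat.gcd_dvd_right a b
    have e1 : (m - a) % Nat.gcd a b = m % Nat.gcd a b := by
      conv_rhs => rw [show m = (m - a) + Nat.gcd a b * ca by omega]
      rw [Nat.add_mul_mod_self_left]
    have e2 : (m - b) % Nat.gcd a b = m % Nat.gcd a b := by
      conv_rhs => rw [show m = (m - b) + Nat.gcd a b * cb by omega]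
      rw [Nat.add_mul_mod_self_left]
    rw [e1, e2]
  rcases hl with ⟨p₁, p₂, q₁, q₂, hP, hQ, _⟩ | hl | hl
  · subst hP; subst hQ; simp; omega
  · obtain ⟨p₁, p₂, q₁, q₂, Y, hY, hP, hQ, hp1, hp2, _⟩ := hl
    subst hP; subst hQ
    simp only [List.cons_append] at pa pb ⊢
    set m := Y.length with hm
    have hm1 : 1 ≤ m := by
      cases Y with
      | nil => exact absurd rfl hY
      | cons z zs => simp [hm]
    have hPlen : (p₁ :: (Y ++ [p₂])).length = m + 2 := by simp [hm]
    have hQlen : (q₁ :: (Y ++ [q₂])).length = m + 2 := by simp [hm]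
    simp only [hPlen] at pa
    simp only [hQlen] at pb
    simp only [hPlen, hQlen]
    by_contra hcon
    have hmab : a + b ≤ m := by omega
    -- Y has period a
    have fa : ∀ i, i + a < m → Y.getD i p₁ = Y.getD (i + a) p₁ := by
      intro i hi
      have := pa p₁ (i+1) (by omega)
      rwa [getD_mid _ _ _ _ _ (by omega), show i + 1 + a = (i + a) + 1 by ring,
        getD_mid _ _ _ _ _ (by omega)] at this
    -- Y has period b
    have fb : ∀ i, i + b < m → Y.getD i p₁ = Y.getD (i + b) p₁ := by
      intro i hi
      have := pb p₁ (i+1) (by omega)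
      rwa [getD_mid _ _ _ _ _ (by omega), show i + 1 + b = (i + b) + 1 by ring,
        getD_mid _ _ _ _ _ (by omega)] at this
    have hp2e : p₂ = Y.getD (m - a) p₁ := by
      have := pa p₁ (m + 1 - a) (by omega)
      rw [show m + 1 - a + a = m + 1 by omega, getD_last,
        show m + 1 - a = (m - a) + 1 by omega,
        getD_mid _ _ _ _ _ (by omega)] at this
      exact this.symm
    have hq2e : q₂ = Y.getD (m - b) p₁ := by
      have := pb p₁ (m + 1 - b) (by omega)
      rw [show m + 1 - b + b = m + 1 by omega, getD_last,
        show m + 1 - b = (m - b) + 1 by omega,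
        getD_mid _ _ _ _ _ (by omega)] at this
      exact this.symm
    have := fine_wilf (fun i => Y.getD i p₁) (a+b) a b m (le_refl _) ha hb hmab
      fa fb (m - a) (m - b) (by omega) (by omega) (hcong m (by omega) (by omega))
    exact hp2 (by rw [hp2e, hq2e]; exact this)
  · obtain ⟨p₁, p₂, q₁, q₂, Y, hY, hP, hQ, hp1, hp2, _⟩ := hl
    subst hP; subst hQ
    simp only [List.cons_append] at pa pb ⊢
    set m := Y.length with hm
    have hm1 : 1 ≤ m := by
      cases Y with
      | nil => exact absurd rfl hY
      | cons z zs => simp [hm]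
    have hPlen : (p₁ :: (Y ++ [p₂])).length = m + 2 := by simp [hm]
    have hQlen : (q₁ :: (Word.bar Y ++ [q₂])).length = m + 2 := by
      simp [length_bar, hm]
    simp only [hPlen] at pa
    simp only [hQlen] at pb
    simp only [hPlen, hQlen]
    by_contra hcon
    have hmab : a + b ≤ m := by omega
    have fa : ∀ i, i + a < m → Y.getD i p₁ = Y.getD (i + a) p₁ := by
      intro i hi
      have := pa p₁ (i+1) (by omega)
      rwa [getD_mid _ _ _ _ _ (by omega), show i + 1 + a = (i + a) + 1 by ring,
        getD_mid _ _ _ _ _ (by omega)] at this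
    have fb : ∀ i, i + b < m → Y.getD i p₁ = Y.getD (i + b) p₁ := by
      intro i hi
      set i' := m - 1 - (i + b) with hi'
      have h1 := pb p₁ (i' + 1) (by omega)
      rw [getD_mid _ _ _ _ _ (by rw [length_bar]; omega),
        show i' + 1 + b = (i' + b) + 1 by ring,
        getD_mid _ _ _ _ _ (by rw [length_bar]; omega)] at h1
      rw [bar_getD Y p₁ p₁ i' (by omega), bar_getD Y p₁ p₁ (i' + b) (by omega)] at h1
      rw [show m - 1 - i' = i + b by omega, show m - 1 - (i' + b) = i by omega] at h1
      have h2 := congrArg Letter.bar h1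
      rw [barbar, barbar] at h2
      exact h2.symm
    have hp2e : p₂ = Y.getD (m - a) p₁ := by
      have := pa p₁ (m + 1 - a) (by omega)
      rw [show m + 1 - a + a = m + 1 by omega, getD_last,
        show m + 1 - a = (m - a) + 1 by omega,
        getD_mid _ _ _ _ _ (by omega)] at this
      exact this.symm
    have hq1e : Letter.bar q₁ = Y.getD (m - b) p₁ := by
      have h1 := pb p₁ 0 (by omega)
      rw [List.getD_cons_zero, show (0:ℕ) + b = (b - 1) + 1 by omega,
        getD_mid _ _ _ _ _ (by rw [length_bar]; omega)] at h1
      rw [bar_getD Y p₁ p₁ (b-1) (by omega),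
        show m - 1 - (b - 1) = m - b by omega] at h1
      rw [h1, barbar]
    have := fine_wilf (fun i => Y.getD i p₁) (a+b) a b m (le_refl _) ha hb hmab
      fa fb (m - a) (m - b) (by omega) (by omega) (hcong m (by omega) (by omega))
    exact hp2 (by rw [hp2e, hq1e]; exact this)

end AuxWord

/-- For `(P,Q) ∈ 𝕃ℙ₂(𝒱,𝒲)`, the positive integers `j`, `k`
witnessing the definition can be chosen with `j ≤ 2 + l(𝒲)/l(𝒱)` and
`k ≤ 2 + l(𝒱)/l(𝒲)`. -/
theorem lp2_exponent_bounds (n : ℕ) (𝒪 𝒱 𝒲 : CWord n) (h𝒪 : SurfaceSymbol 𝒪)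
    (hV : CReduced 𝒱) (hW : CReduced 𝒲) (P Q : Word n) (h : LP2 𝒪 𝒱 𝒲 P Q) :
    ∃ j k : ℕ, 0 < j ∧ 0 < k ∧ SubwordPow P 𝒱 j ∧ SubwordPow Q 𝒲 k ∧
      (j - 1) * clen 𝒱 < P.length ∧ P.length ≤ j * clen 𝒱 ∧
      (k - 1) * clen 𝒲 < Q.length ∧ Q.length ≤ k * clen 𝒲 ∧
      (j : ℚ) ≤ 2 + (clen 𝒲 : ℚ) / (clen 𝒱 : ℚ) ∧
      (k : ℚ) ≤ 2 + (clen 𝒱 : ℚ) / (clen 𝒲 : ℚ) := by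
  obtain ⟨hlink, j, k, hj, hk, hPsub, hQsub, w1, w2, w3, w4⟩ := h
  obtain ⟨V, hVrep, hVinf⟩ := hPsub
  obtain ⟨W, hWrep, hWinf⟩ := hQsub
  have haV : clen 𝒱 = V.length := by rw [← hVrep]; exact Cycle.length_coe V
  have hbW : clen 𝒲 = W.length := by rw [← hWrep]; exact Cycle.length_coe W
  have hVne : V ≠ [] := by
    intro hnil
    exact hV.1 (by rw [← hVrep, hnil]; exact (Cycle.coe_eq_nil _).mpr rfl)
  have hWne : W ≠ [] := by
    intro hnil
    exact hW.1 (by rw [← hWrep, hnil]; exact (Cycle.coe_eq_nil _).mpr rfl)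
  have ha : 0 < clen 𝒱 := by rw [haV]; exact List.length_pos_iff.mpr hVne
  have hb : 0 < clen 𝒲 := by rw [hbW]; exact List.length_pos_iff.mpr hWne
  have pa : ∀ d : Letter n, ∀ i, i + clen 𝒱 < P.length →
      P.getD i d = P.getD (i + clen 𝒱) d := by
    intro d i hi
    rw [haV] at hi ⊢
    exact infix_period hVinf d i hi
  have pb : ∀ d : Letter n, ∀ i, i + clen 𝒲 < Q.length →
      Q.getD i d = Q.getD (i + clen 𝒲) d := by
    intro d i hi
    rw [hbW] at hi ⊢
    exact infix_period hWinf d i hi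
  have bound := linked_len_bound 𝒪 ha hb P Q pa pb hlink.2.2.2.2
  refine ⟨j, k, hj, hk, ⟨V, hVrep, hVinf⟩, ⟨W, hWrep, hWinf⟩, w1, w2, w3, w4, ?_, ?_⟩
  · obtain ⟨jj, rfl⟩ : ∃ jj, j = jj + 1 := ⟨j - 1, by omega⟩
    have w1' : jj * clen 𝒱 < P.length := by simpa using w1
    have h1 : jj * clen 𝒱 ≤ clen 𝒱 + clen 𝒲 := by
      have := bound.1; omega
    have haq : (0:ℚ) < (clen 𝒱 : ℚ) := by exact_mod_cast ha
    have hane : ((clen 𝒱 : ℚ)) ≠ 0 := ne_of_gt haq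
    rw [show (2:ℚ) + (clen 𝒲 : ℚ) / (clen 𝒱 : ℚ)
        = (2 * (clen 𝒱 : ℚ) + (clen 𝒲 : ℚ)) / (clen 𝒱 : ℚ) by field_simp,
      le_div_iff₀ haq]
    have h1q : (jj : ℚ) * (clen 𝒱 : ℚ) ≤ (clen 𝒱 : ℚ) + (clen 𝒲 : ℚ) := by
      exact_mod_cast h1
    push_cast
    nlinarith [h1q]
  · obtain ⟨kk, rfl⟩ : ∃ kk, k = kk + 1 := ⟨k - 1, by omega⟩
    have w3' : kk * clen 𝒲 < Q.length := by simpa using w3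
    have h1 : kk * clen 𝒲 ≤ clen 𝒱 + clen 𝒲 := by
      have := bound.2; omega
    have hbq : (0:ℚ) < (clen 𝒲 : ℚ) := by exact_mod_cast hb
    have hbne : ((clen 𝒲 : ℚ)) ≠ 0 := ne_of_gt hbq
    rw [show (2:ℚ) + (clen 𝒱 : ℚ) / (clen 𝒲 : ℚ)
        = (2 * (clen 𝒲 : ℚ) + (clen 𝒱 : ℚ)) / (clen 𝒲 : ℚ) by field_simp,
      le_div_iff₀ hbq]
    have h1q : (kk : ℚ) * (clen 𝒲 : ℚ) ≤ (clen 𝒱 : ℚ) + (clen 𝒲 : ℚ) := by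
      exact_mod_cast h1
    push_cast
    nlinarith [h1q]

end CyclicWords
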